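/- arXiv:2605.29351 — 3 statements merged into one kernel-verified Lean document; each statement's English description precedes it below -/
import Mathlib

section
/- Let μ be a probability measure on ℝ^d with finite second moment, and let X_β[μ](x) = F_{β,μ}(x) − x be the Gaussian-attention drift with kernel G_β. Then ∫ |X_β[μ](x)|² μ(dx) ≤ 2 ∫ |x|² μ(dx). -/
open MeasureTheory Real
open scoped RealInnerProductSpace

noncomputable section

def Gkernel (d : ℕ) (β : ℝ) (z : EuclideanSpace ℝ (Fin d)) : ℝ :=
  (β / (2 * π)) ^ ((d : ℝ) / 2) * Real.exp (-β * ‖z‖ ^ 2 / 2)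

def Gconv (d : ℕ) (β : ℝ) (μ : Measure (EuclideanSpace ℝ (Fin d)))
    (x : EuclideanSpace ℝ (Fin d)) : ℝ :=
  ∫ y, Gkernel d β (x - y) ∂μ

def Gbarycenter (d : ℕ) (β : ℝ) (μ : Measure (EuclideanSpace ℝ (Fin d)))
    (x : EuclideanSpace ℝ (Fin d)) : EuclideanSpace ℝ (Fin d) :=
  (Gconv d β μ x)⁻¹ • ∫ y, Gkernel d β (x - y) • y ∂μ

def Gdrift (d : ℕ) (β : ℝ) (μ : Measure (EuclideanSpace ℝ (Fin d)))
    (x : EuclideanSpace ℝ (Fin d)) : EuclideanSpace ℝ (Fin d) :=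
  Gbarycenter d β μ x - x

lemma cs_aux {A B C : ℝ} (hA : 0 ≤ A) (hB : 0 < B) (hC : 0 ≤ C)
    (h : ∀ t : ℝ, 0 < t → 2 * A ≤ t * B + C / t) : A ^ 2 ≤ B * C := by
  rcases eq_or_lt_of_le hC with hC0 | hC0
  · have hA0 : A ≤ 0 := by
      by_contra hA'
      push_neg at hA'
      have h1 := h (A / B) (div_pos hA' hB)
      rw [div_mul_cancel₀ _ hB.ne', ← hC0, zero_div] at h1
      linarith
    nlinarith
  · set t := Real.sqrt (C / B) with ht_def
    have htpos : 0 < t := Real.sqrt_pos.mpr (div_pos hC0 hB)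
    have ht2 : t ^ 2 = C / B := Real.sq_sqrt (div_pos hC0 hB).le
    have h1 := h t htpos
    have hCt : C = t ^ 2 * B := by rw [ht2]; field_simp
    have hCdiv : C / t = t * B := by rw [hCt, pow_two]; field_simp
    rw [hCdiv] at h1
    have hAtB : A ≤ t * B := by linarith
    calc A ^ 2 ≤ (t * B) ^ 2 := by nlinarith
      _ = C * B := by rw [mul_pow, ht2]; field_simp
      _ = B * C := mul_comm _ _


lemma chebyshev_aux {α : Type*} [MeasurableSpace α] (μ : Measure α) [IsProbabilityMeasure μ]
    {f g : α → ℝ} (hf : Integrable f μ) (hg : Integrable g μ)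
    (hfg : Integrable (fun y => f y * g y) μ)
    (h : ∀ y z, (f y - f z) * (g y - g z) ≤ 0) :
    ∫ y, f y * g y ∂μ ≤ (∫ y, f y ∂μ) * ∫ y, g y ∂μ := by
  have h1 : Integrable (fun p : α × α => f p.1 * g p.2) (μ.prod μ) := hf.mul_prod hg
  have h2 : Integrable (fun p : α × α => f p.2 * g p.1) (μ.prod μ) := by
    have := hg.mul_prod hf
    simpa [mul_comm] using this
  have h3 : Integrable (fun p : α × α => f p.1 * g p.1) (μ.prod μ) := by
    have := hfg.mul_prod ((integrable_const (1:ℝ)) : Integrable _ μ)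
    simpa using this
  have h4 : Integrable (fun p : α × α => f p.2 * g p.2) (μ.prod μ) := by
    have := ((integrable_const (1:ℝ)) : Integrable _ μ).mul_prod hfg
    simpa using this
  have key : ∫ p : α × α, (f p.1 - f p.2) * (g p.1 - g p.2) ∂(μ.prod μ) ≤ 0 :=
    integral_nonpos fun p => h _ _
  have e1 : ∫ p : α × α, f p.1 * g p.1 ∂(μ.prod μ) = ∫ y, f y * g y ∂μ := by
    have := integral_prod_mul (μ := μ) (ν := μ) (fun y => f y * g y) (fun _ => (1:ℝ))
    simpa using this
  have e2 : ∫ p : α × α, f p.2 * g p.2 ∂(μ.prod μ) = ∫ y, f y * g y ∂μ := by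
    have := integral_prod_mul (μ := μ) (ν := μ) (fun _ => (1:ℝ)) (fun y => f y * g y)
    simpa using this
  have e3 : ∫ p : α × α, f p.1 * g p.2 ∂(μ.prod μ) = (∫ y, f y ∂μ) * ∫ y, g y ∂μ :=
    integral_prod_mul f g
  have e4 : ∫ p : α × α, f p.2 * g p.1 ∂(μ.prod μ) = (∫ y, f y ∂μ) * ∫ y, g y ∂μ := by
    have := integral_prod_mul (μ := μ) (ν := μ) g f
    rw [show (fun p : α × α => f p.2 * g p.1) = fun p : α × α => g p.1 * f p.2 from
      funext fun p => mul_comm _ _, this, mul_comm]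
  have expand : ∫ p : α × α, (f p.1 - f p.2) * (g p.1 - g p.2) ∂(μ.prod μ)
      = 2 * ∫ y, f y * g y ∂μ - 2 * ((∫ y, f y ∂μ) * ∫ y, g y ∂μ) := by
    have heq : (fun p : α × α => (f p.1 - f p.2) * (g p.1 - g p.2))
        = fun p : α × α => (f p.1 * g p.1 + f p.2 * g p.2) - (f p.1 * g p.2 + f p.2 * g p.1) :=
      funext fun p => by ring
    have h34 : Integrable (fun p : α × α => f p.1 * g p.1 + f p.2 * g p.2) (μ.prod μ) := h3.add h4
    have h12 : Integrable (fun p : α × α => f p.1 * g p.2 + f p.2 * g p.1) (μ.prod μ) := h1.add h2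
    rw [heq, integral_sub h34 h12, integral_add h3 h4, integral_add h1 h2,
      e1, e2, e3, e4]
    ring
  rw [expand] at key
  linarith

lemma key_pointwise {d : ℕ} (β : ℝ) (hβ : 0 < β)
    (μ : Measure (EuclideanSpace ℝ (Fin d))) [IsProbabilityMeasure μ]
    (hmom : Integrable (fun x => ‖x‖ ^ 2) μ) (x : EuclideanSpace ℝ (Fin d)) :
    ‖Gdrift d β μ x‖ ^ 2 ≤ ∫ y, ‖y - x‖ ^ 2 ∂μ := by
  set c : ℝ := (β / (2 * π)) ^ ((d : ℝ) / 2) with hc_def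
  have hc : 0 < c := Real.rpow_pos_of_pos (by positivity) _
  set w : EuclideanSpace ℝ (Fin d) → ℝ := fun y => Gkernel d β (x - y) with hw_def
  have hw_eq : ∀ y, w y = c * Real.exp (-β * ‖y - x‖ ^ 2 / 2) := by
    intro y
    simp only [hw_def, Gkernel, ← hc_def, norm_sub_rev x y]
  have hw_pos : ∀ y, 0 < w y := fun y => by
    rw [hw_eq]; positivity
  have hw_le : ∀ y, w y ≤ c := fun y => by
    rw [hw_eq]
    have h1 : Real.exp (-β * ‖y - x‖ ^ 2 / 2) ≤ 1 := by
      rw [Real.exp_le_one_iff]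
      have : 0 ≤ β * ‖y - x‖ ^ 2 / 2 := by positivity
      linarith
    nlinarith
  have hw_cont : Continuous w := by
    rw [show w = fun y => c * Real.exp (-β * ‖y - x‖ ^ 2 / 2) from funext hw_eq]
    fun_prop
  have hw_int : Integrable w μ := (integrable_const c).mono' hw_cont.aestronglyMeasurable
    (ae_of_all _ fun y => by rw [Real.norm_of_nonneg (hw_pos y).le]; exact hw_le y)
  -- first moment
  have hm1 : Integrable (fun y : EuclideanSpace ℝ (Fin d) => ‖y‖) μ := by
    have hg : Integrable (fun y : EuclideanSpace ℝ (Fin d) => 1 + ‖y‖ ^ 2) μ :=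
      (integrable_const (1:ℝ)).add hmom
    refine hg.mono' continuous_norm.aestronglyMeasurable (ae_of_all _ fun y => ?_)
    rw [norm_norm]
    nlinarith [sq_nonneg (‖y‖ - 1), norm_nonneg y]
  -- shifted second moment
  have hr_cont : Continuous (fun y : EuclideanSpace ℝ (Fin d) => ‖y - x‖ ^ 2) := by fun_prop
  have hr_int : Integrable (fun y : EuclideanSpace ℝ (Fin d) => ‖y - x‖ ^ 2) μ := by
    have hg : Integrable (fun y : EuclideanSpace ℝ (Fin d) => 2 * ‖y‖ ^ 2 + 2 * ‖x‖ ^ 2) μ :=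
      (hmom.const_mul 2).add (integrable_const (2 * ‖x‖ ^ 2))
    refine hg.mono' hr_cont.aestronglyMeasurable (ae_of_all _ fun y => ?_)
    rw [Real.norm_of_nonneg (by positivity)]
    have h1 : ‖y - x‖ ^ 2 ≤ (‖y‖ + ‖x‖) ^ 2 :=
      pow_le_pow_left₀ (norm_nonneg _) (norm_sub_le y x) 2
    nlinarith [h1, sq_nonneg (‖y‖ - ‖x‖)]
  set B : ℝ := Gconv d β μ x with hB_def
  have hB : 0 < B := by
    rw [hB_def, Gconv]
    rw [integral_pos_iff_support_of_nonneg (fun y => (hw_pos y).le) hw_int]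
    have hs : (Function.support fun y => Gkernel d β (x - y)) = Set.univ :=
      Set.eq_univ_of_forall fun y => (hw_pos y).ne'
    rw [hs, measure_univ]
    norm_num
  have hwy_int : Integrable (fun y => w y • y) μ := by
    have hg : Integrable (fun y : EuclideanSpace ℝ (Fin d) => c * ‖y‖) μ := hm1.const_mul c
    refine hg.mono' (hw_cont.smul continuous_id).aestronglyMeasurable
      (ae_of_all _ fun y => ?_)
    rw [norm_smul, Real.norm_of_nonneg (hw_pos y).le]
    exact mul_le_mul_of_nonneg_right (hw_le y) (norm_nonneg y)
  have hwr_int : Integrable (fun y => w y * ‖y - x‖ ^ 2) μ := by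
    have hg : Integrable (fun y : EuclideanSpace ℝ (Fin d) => c * ‖y - x‖ ^ 2) μ :=
      hr_int.const_mul c
    refine hg.mono' (hw_cont.mul hr_cont).aestronglyMeasurable (ae_of_all _ fun y => ?_)
    rw [Real.norm_of_nonneg (mul_nonneg (hw_pos y).le (by positivity))]
    exact mul_le_mul_of_nonneg_right (hw_le y) (by positivity)
  have hdrift : Gdrift d β μ x = B⁻¹ • ∫ y, w y • (y - x) ∂μ := by
    have he : ∫ y, w y • (y - x) ∂μ = (∫ y, w y • y ∂μ) - B • x := by
      rw [show (fun y => w y • (y - x)) = fun y => w y • y - w y • x from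
        funext fun y => smul_sub _ _ _]
      rw [integral_sub hwy_int (hw_int.smul_const x), integral_smul_const]
      rfl
    rw [Gdrift, Gbarycenter, he, smul_sub, smul_smul, inv_mul_cancel₀ hB.ne', one_smul]
  set A : ℝ := ∫ y, w y * ‖y - x‖ ∂μ with hA_def
  set C : ℝ := ∫ y, w y * ‖y - x‖ ^ 2 ∂μ with hC_def
  set I2 : ℝ := ∫ y, ‖y - x‖ ^ 2 ∂μ with hI2_def
  have hA0 : 0 ≤ A := integral_nonneg fun y => mul_nonneg (hw_pos y).le (norm_nonneg _)
  have hC0 : 0 ≤ C := integral_nonneg fun y => mul_nonneg (hw_pos y).le (by positivity)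
  have hnorm : ‖Gdrift d β μ x‖ ≤ B⁻¹ * A := by
    rw [hdrift, norm_smul, Real.norm_of_nonneg (inv_nonneg.mpr hB.le)]
    refine mul_le_mul_of_nonneg_left ?_ (inv_nonneg.mpr hB.le)
    calc ‖∫ y, w y • (y - x) ∂μ‖ ≤ ∫ y, ‖w y • (y - x)‖ ∂μ := norm_integral_le_integral_norm _
      _ = A := integral_congr_ae (ae_of_all _ fun y => by
          simp [norm_smul, Real.norm_of_nonneg (hw_pos y).le])
  have hCS : ∀ t : ℝ, 0 < t → 2 * A ≤ t * B + C / t := by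
    intro t ht
    have hpt : ∀ y, 2 * (w y * ‖y - x‖) ≤ t * w y + (w y * ‖y - x‖ ^ 2) / t := by
      intro y
      have key2 : 2 * ‖y - x‖ ≤ t + ‖y - x‖ ^ 2 / t := by
        have heq : t + ‖y - x‖ ^ 2 / t - 2 * ‖y - x‖ = (t - ‖y - x‖) ^ 2 / t := by
          field_simp; ring
        nlinarith [div_nonneg (sq_nonneg (t - ‖y - x‖)) ht.le]
      calc 2 * (w y * ‖y - x‖) = w y * (2 * ‖y - x‖) := by ring
        _ ≤ w y * (t + ‖y - x‖ ^ 2 / t) := mul_le_mul_of_nonneg_left key2 (hw_pos y).le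
        _ = t * w y + (w y * ‖y - x‖ ^ 2) / t := by ring
    calc 2 * A = ∫ y, 2 * (w y * ‖y - x‖) ∂μ := (integral_const_mul 2 _).symm
      _ ≤ ∫ y, (t * w y + (w y * ‖y - x‖ ^ 2) / t) ∂μ := by
          refine integral_mono_of_nonneg (ae_of_all _ fun y =>
              mul_nonneg (by norm_num) (mul_nonneg (hw_pos y).le (norm_nonneg _)))
            ((hw_int.const_mul t).add (hwr_int.div_const t)) (ae_of_all _ hpt)
      _ = t * B + C / t := by
          rw [integral_add (hw_int.const_mul t) (hwr_int.div_const t), integral_const_mul,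
            integral_div]
          rfl
  have hACB : A ^ 2 ≤ B * C := cs_aux hA0 hB hC0 hCS
  have hcheb : C ≤ I2 * B := by
    have h := chebyshev_aux μ (f := fun y => ‖y - x‖ ^ 2) (g := w) hr_int hw_int
      (by simpa [mul_comm] using hwr_int) ?_
    · calc C = ∫ y, ‖y - x‖ ^ 2 * w y ∂μ := integral_congr_ae (ae_of_all _ fun y => mul_comm _ _)
        _ ≤ I2 * B := by rw [hI2_def, hB_def, Gconv]; exact h
    · intro y z
      show (‖y - x‖ ^ 2 - ‖z - x‖ ^ 2) * (w y - w z) ≤ 0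
      rcases le_total (‖y - x‖ ^ 2) (‖z - x‖ ^ 2) with hle | hle
      · have hwge : w z ≤ w y := by
          rw [hw_eq, hw_eq]
          refine mul_le_mul_of_nonneg_left (Real.exp_le_exp.mpr (by nlinarith)) hc.le
        exact mul_nonpos_of_nonpos_of_nonneg (by linarith) (by linarith)
      · have hwge : w y ≤ w z := by
          rw [hw_eq, hw_eq]
          refine mul_le_mul_of_nonneg_left (Real.exp_le_exp.mpr (by nlinarith)) hc.le
        exact mul_nonpos_of_nonneg_of_nonpos (by linarith) (by linarith)
  calc ‖Gdrift d β μ x‖ ^ 2 ≤ (B⁻¹ * A) ^ 2 := by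
        exact pow_le_pow_left₀ (norm_nonneg _) hnorm 2
    _ = A ^ 2 / B ^ 2 := by rw [mul_pow]; ring
    _ ≤ (B * (I2 * B)) / B ^ 2 := by
        gcongr
        exact hACB.trans (mul_le_mul_of_nonneg_left hcheb hB.le)
    _ = I2 := by field_simp

/-- barycentric action estimate. If `μ` has finite second moment,
then `∫ |X_β[μ](x)|² μ(dx) ≤ 2 ∫ |x|² μ(dx)`. -/
theorem barycentric_action_estimate {d : ℕ} (β : ℝ) (hβ : 0 < β)
    (μ : Measure (EuclideanSpace ℝ (Fin d))) [IsProbabilityMeasure μ]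
    (hmom : Integrable (fun x => ‖x‖ ^ 2) μ) :
    ∫ x, ‖Gdrift d β μ x‖ ^ 2 ∂μ ≤ 2 * ∫ x, ‖x‖ ^ 2 ∂μ := by
  have hm1 : Integrable (fun y : EuclideanSpace ℝ (Fin d) => ‖y‖) μ := by
    have hg : Integrable (fun y : EuclideanSpace ℝ (Fin d) => 1 + ‖y‖ ^ 2) μ :=
      (integrable_const (1:ℝ)).add hmom
    refine hg.mono' continuous_norm.aestronglyMeasurable (ae_of_all _ fun y => ?_)
    rw [norm_norm]
    nlinarith [sq_nonneg (‖y‖ - 1), norm_nonneg y]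
  have hid : Integrable (fun y : EuclideanSpace ℝ (Fin d) => y) μ :=
    hm1.mono' aestronglyMeasurable_id (ae_of_all _ fun y => le_refl _)
  set xbar : EuclideanSpace ℝ (Fin d) := ∫ y, y ∂μ with hxbar_def
  set M2 : ℝ := ∫ y, ‖y‖ ^ 2 ∂μ with hM2_def
  have hinner_int : Integrable (fun x : EuclideanSpace ℝ (Fin d) => ⟪xbar, x⟫) μ := by
    have hg : Integrable (fun x : EuclideanSpace ℝ (Fin d) => ‖xbar‖ * ‖x‖) μ :=
      hm1.const_mul ‖xbar‖
    refine hg.mono' (continuous_const.inner continuous_id).aestronglyMeasurable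
      (ae_of_all _ fun y => ?_)
    rw [Real.norm_eq_abs]
    exact abs_real_inner_le_norm _ _
  have hg_eval : ∀ x : EuclideanSpace ℝ (Fin d),
      ∫ y, ‖y - x‖ ^ 2 ∂μ = M2 + ‖x‖ ^ 2 - 2 * ⟪xbar, x⟫ := by
    intro x
    have h1 : ∀ y : EuclideanSpace ℝ (Fin d),
        ‖y - x‖ ^ 2 = ‖y‖ ^ 2 + ‖x‖ ^ 2 - 2 * ⟪x, y⟫ := fun y => by
      rw [norm_sub_sq_real, real_inner_comm]; ring
    rw [integral_congr_ae (ae_of_all _ h1)]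
    have hix : Integrable (fun y : EuclideanSpace ℝ (Fin d) => ⟪x, y⟫) μ := by
      have hg : Integrable (fun y : EuclideanSpace ℝ (Fin d) => ‖x‖ * ‖y‖) μ :=
        hm1.const_mul ‖x‖
      refine hg.mono' (continuous_const.inner continuous_id).aestronglyMeasurable
        (ae_of_all _ fun y => ?_)
      rw [Real.norm_eq_abs]
      exact abs_real_inner_le_norm _ _
    have hsum : Integrable (fun y : EuclideanSpace ℝ (Fin d) => ‖y‖ ^ 2 + ‖x‖ ^ 2) μ :=
      hmom.add (integrable_const _)
    rw [integral_sub hsum (hix.const_mul 2),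
      integral_add hmom (integrable_const _), integral_const, integral_const_mul,
      integral_inner hid x, probReal_univ]
    simp only [ENNReal.toReal_one, one_smul, real_inner_comm x]
    rfl
  have hg_int : Integrable (fun x => ∫ y, ‖y - x‖ ^ 2 ∂μ) μ := by
    rw [show (fun x => ∫ y, ‖y - x‖ ^ 2 ∂μ)
        = fun x : EuclideanSpace ℝ (Fin d) => M2 + ‖x‖ ^ 2 - 2 * ⟪xbar, x⟫ from funext hg_eval]
    exact ((integrable_const M2).add hmom).sub (hinner_int.const_mul 2)
  have hfinal : ∫ x, (∫ y, ‖y - x‖ ^ 2 ∂μ) ∂μ ≤ 2 * M2 := by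
    have hsum : Integrable (fun x : EuclideanSpace ℝ (Fin d) => M2 + ‖x‖ ^ 2) μ :=
      (integrable_const M2).add hmom
    rw [integral_congr_ae (ae_of_all _ hg_eval),
      integral_sub hsum (hinner_int.const_mul 2),
      integral_add (integrable_const M2) hmom, integral_const, integral_const_mul,
      integral_inner hid xbar, probReal_univ, real_inner_self_eq_norm_sq]
    simp only [ENNReal.toReal_one, one_smul]
    nlinarith [sq_nonneg ‖xbar‖]
  calc ∫ x, ‖Gdrift d β μ x‖ ^ 2 ∂μ ≤ ∫ x, (∫ y, ‖y - x‖ ^ 2 ∂μ) ∂μ :=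
      integral_mono_of_nonneg (ae_of_all _ fun x => sq_nonneg _) hg_int
        (ae_of_all _ fun x => key_pointwise β hβ μ hmom x)
    _ ≤ 2 * M2 := hfinal

end
end

section
/- Fix β > 0 and R > 0. There exists a constant L = L(β,R,d) > 0 such that for all x, x' ∈ B_R and all probability measures μ, ν supported in B_R, the Gaussian-attention drift satisfies |X_β[μ](x) − X_β[ν](x')| ≤ L(|x − x'| + W₁(μ, ν)). -/
open MeasureTheory Metric Real

noncomputable section
variable {d : ℕ}

def W1 (μ ν : Measure (EuclideanSpace ℝ (Fin d))) : ℝ :=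
  sSup {c | ∃ φ : EuclideanSpace ℝ (Fin d) → ℝ,
    LipschitzWith 1 φ ∧ φ 0 = 0 ∧ c = (∫ x, φ x ∂μ) - ∫ x, φ x ∂ν}

variable {R : ℝ} {μ ν : Measure (EuclideanSpace ℝ (Fin d))}

lemma ae_mem_ball (hμ : μ (closedBall (0 : EuclideanSpace ℝ (Fin d)) R)ᶜ = 0) :
    ∀ᵐ y ∂μ, y ∈ closedBall (0 : EuclideanSpace ℝ (Fin d)) R := by
  rw [MeasureTheory.ae_iff]
  have : {a : EuclideanSpace ℝ (Fin d) | ¬a ∈ closedBall (0 : EuclideanSpace ℝ (Fin d)) R}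
      = (closedBall (0 : EuclideanSpace ℝ (Fin d)) R)ᶜ := rfl
  rw [this]; exact hμ

lemma integral_lip_le (hμprob : IsProbabilityMeasure μ)
    (hμ : μ (closedBall (0 : EuclideanSpace ℝ (Fin d)) R)ᶜ = 0)
    {φ : EuclideanSpace ℝ (Fin d) → ℝ} (hφ : LipschitzWith 1 φ) (hφ0 : φ 0 = 0) :
    |∫ x, φ x ∂μ| ≤ R := by
  haveI := hμprob
  have hb : ∀ᵐ y ∂μ, ‖φ y‖ ≤ R := by
    filter_upwards [ae_mem_ball hμ] with y hy
    have h1 : dist (φ y) (φ 0) ≤ 1 * dist y 0 := by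
      simpa using hφ.dist_le_mul y 0
    rw [hφ0, dist_zero_right, dist_zero_right, one_mul] at h1
    exact h1.trans (mem_closedBall_zero_iff.mp hy)
  have := norm_integral_le_of_norm_le_const (μ := μ) hb
  simpa using this

lemma W1_bddAbove (hμprob : IsProbabilityMeasure μ) (hνprob : IsProbabilityMeasure ν)
    (hμ : μ (closedBall (0 : EuclideanSpace ℝ (Fin d)) R)ᶜ = 0)
    (hν : ν (closedBall (0 : EuclideanSpace ℝ (Fin d)) R)ᶜ = 0) :
    BddAbove {c | ∃ φ : EuclideanSpace ℝ (Fin d) → ℝ,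
      LipschitzWith 1 φ ∧ φ 0 = 0 ∧ c = (∫ x, φ x ∂μ) - ∫ x, φ x ∂ν} := by
  refine ⟨2 * R, fun c hc => ?_⟩
  obtain ⟨φ, h1, h2, rfl⟩ := hc
  have hμi := integral_lip_le hμprob hμ h1 h2
  have hνi := integral_lip_le hνprob hν h1 h2
  have := abs_sub_abs_le_abs_sub (∫ x, φ x ∂μ) (∫ x, φ x ∂ν)
  have h3 := abs_sub ((∫ x, φ x ∂μ)) ((∫ x, φ x ∂ν))
  calc (∫ x, φ x ∂μ) - ∫ x, φ x ∂ν ≤ |(∫ x, φ x ∂μ) - ∫ x, φ x ∂ν| := le_abs_self _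
    _ ≤ |∫ x, φ x ∂μ| + |∫ x, φ x ∂ν| := abs_sub _ _
    _ ≤ 2 * R := by linarith

lemma le_W1 (hμprob : IsProbabilityMeasure μ) (hνprob : IsProbabilityMeasure ν)
    (hμ : μ (closedBall (0 : EuclideanSpace ℝ (Fin d)) R)ᶜ = 0)
    (hν : ν (closedBall (0 : EuclideanSpace ℝ (Fin d)) R)ᶜ = 0)
    {φ : EuclideanSpace ℝ (Fin d) → ℝ} (hφ : LipschitzWith 1 φ) (hφ0 : φ 0 = 0) :
    (∫ x, φ x ∂μ) - ∫ x, φ x ∂ν ≤ W1 μ ν :=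
  le_csSup (W1_bddAbove hμprob hνprob hμ hν) ⟨φ, hφ, hφ0, rfl⟩

lemma W1_nonneg (hμprob : IsProbabilityMeasure μ) (hνprob : IsProbabilityMeasure ν)
    (hμ : μ (closedBall (0 : EuclideanSpace ℝ (Fin d)) R)ᶜ = 0)
    (hν : ν (closedBall (0 : EuclideanSpace ℝ (Fin d)) R)ᶜ = 0) :
    0 ≤ W1 μ ν := by
  have h := le_W1 hμprob hνprob hμ hν (φ := fun _ => (0:ℝ))
    (LipschitzWith.of_dist_le_mul (fun a b => by simp [dist_nonneg])) rfl
  simpa using h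

lemma lipschitz_integrable (hμprob : IsProbabilityMeasure μ)
    (hμ : μ (closedBall (0 : EuclideanSpace ℝ (Fin d)) R)ᶜ = 0)
    {φ : EuclideanSpace ℝ (Fin d) → ℝ} {K : ℝ} (hK : 0 < K)
    (hφ : ∀ a b, dist (φ a) (φ b) ≤ K * dist a b) :
    Integrable φ μ := by
  haveI := hμprob
  have hlip : LipschitzWith (Real.toNNReal K) φ :=
    LipschitzWith.of_dist_le_mul (fun a b => by
      rw [Real.coe_toNNReal K hK.le]; exact hφ a b)
  refine Integrable.mono' (integrable_const (|φ 0| + K * R)) hlip.continuous.aestronglyMeasurable ?_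
  filter_upwards [ae_mem_ball hμ] with y hy
  have h1 := hφ y 0
  rw [Real.dist_eq, dist_zero_right] at h1
  have h2 : ‖y‖ ≤ R := mem_closedBall_zero_iff.mp hy
  have : |φ y| - |φ 0| ≤ |φ y - φ 0| := abs_sub_abs_le_abs_sub _ _
  rw [Real.norm_eq_abs]
  nlinarith [abs_nonneg (φ 0), mul_le_mul_of_nonneg_left h2 hK.le]

lemma one_sided_W1 (hμprob : IsProbabilityMeasure μ) (hνprob : IsProbabilityMeasure ν)
    (hμ : μ (closedBall (0 : EuclideanSpace ℝ (Fin d)) R)ᶜ = 0)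
    (hν : ν (closedBall (0 : EuclideanSpace ℝ (Fin d)) R)ᶜ = 0)
    {φ : EuclideanSpace ℝ (Fin d) → ℝ} {K : ℝ} (hK : 0 < K)
    (hφ : ∀ a b, dist (φ a) (φ b) ≤ K * dist a b) :
    (∫ x, φ x ∂μ) - ∫ x, φ x ∂ν ≤ K * W1 μ ν := by
  haveI := hμprob; haveI := hνprob
  set ψ : EuclideanSpace ℝ (Fin d) → ℝ := fun y => K⁻¹ * (φ y - φ 0) with hψdef
  have hψ : LipschitzWith 1 ψ := by
    apply LipschitzWith.of_dist_le_mul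
    intro a b
    have : dist (ψ a) (ψ b) = K⁻¹ * dist (φ a) (φ b) := by
      rw [Real.dist_eq, Real.dist_eq, hψdef]
      simp only []
      rw [← mul_sub, abs_mul, abs_of_pos (inv_pos.mpr hK)]
      ring_nf
    rw [this]
    have := hφ a b
    calc K⁻¹ * dist (φ a) (φ b) ≤ K⁻¹ * (K * dist a b) := by
          apply mul_le_mul_of_nonneg_left (hφ a b) (inv_pos.mpr hK).le
      _ = dist a b := by field_simp
      _ = ↑(1:NNReal) * dist a b := by simp
  have hψ0 : ψ 0 = 0 := by simp [hψdef]
  have intμ : Integrable φ μ := lipschitz_integrable hμprob hμ hK hφ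
  have intν : Integrable φ ν := lipschitz_integrable hνprob hν hK hφ
  have hint : ∀ (ρ : Measure (EuclideanSpace ℝ (Fin d))), IsProbabilityMeasure ρ →
      Integrable φ ρ → (∫ x, ψ x ∂ρ) = K⁻¹ * ((∫ x, φ x ∂ρ) - φ 0) := by
    intro ρ hρ hi
    haveI := hρ
    rw [hψdef]
    rw [integral_const_mul]
    congr 1
    rw [MeasureTheory.integral_sub hi (integrable_const _), MeasureTheory.integral_const]
    simp
  have h := le_W1 hμprob hνprob hμ hν hψ hψ0
  rw [hint μ hμprob intμ, hint ν hνprob intν] at h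
  have h2 : K⁻¹ * ((∫ x, φ x ∂μ) - ∫ x, φ x ∂ν) ≤ W1 μ ν := by
    calc K⁻¹ * ((∫ x, φ x ∂μ) - ∫ x, φ x ∂ν)
        = K⁻¹ * ((∫ x, φ x ∂μ) - φ 0) - K⁻¹ * ((∫ x, φ x ∂ν) - φ 0) := by ring
      _ ≤ W1 μ ν := h
  have hKK : K * K⁻¹ = 1 := mul_inv_cancel₀ hK.ne'
  have h3 := mul_le_mul_of_nonneg_left h2 hK.le
  rw [← mul_assoc, hKK, one_mul] at h3
  exact h3

lemma abs_integral_sub_le_W1 (hμprob : IsProbabilityMeasure μ) (hνprob : IsProbabilityMeasure ν)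
    (hμ : μ (closedBall (0 : EuclideanSpace ℝ (Fin d)) R)ᶜ = 0)
    (hν : ν (closedBall (0 : EuclideanSpace ℝ (Fin d)) R)ᶜ = 0)
    {φ : EuclideanSpace ℝ (Fin d) → ℝ} {K : ℝ} (hK : 0 < K)
    (hφ : ∀ a b, dist (φ a) (φ b) ≤ K * dist a b) :
    |(∫ x, φ x ∂μ) - ∫ x, φ x ∂ν| ≤ K * W1 μ ν := by
  have h1 := one_sided_W1 hμprob hνprob hμ hν hK hφ
  have h2 := one_sided_W1 hμprob hνprob hμ hν hK
    (φ := fun y => -φ y) (fun a b => by simpa [dist_comm] using hφ a b)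
  rw [MeasureTheory.integral_neg, MeasureTheory.integral_neg] at h2
  rw [abs_le]
  constructor <;> linarith

-- quotient estimate
lemma quot_est {E : Type*} [NormedAddCommGroup E] [NormedSpace ℝ E]
    {c0 M : ℝ} (hc0 : 0 < c0) {D D' : ℝ} {A A' : E}
    (hD : c0 ≤ D) (hD' : c0 ≤ D') (hA' : ‖A'‖ ≤ M) :
    ‖D⁻¹ • A - D'⁻¹ • A'‖ ≤ c0⁻¹ * ‖A - A'‖ + (M / c0 ^ 2) * |D - D'| := by
  have hDpos : 0 < D := hc0.trans_le hD
  have hD'pos : 0 < D' := hc0.trans_le hD'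
  have hid : D⁻¹ • A - D'⁻¹ • A' = D⁻¹ • (A - A') + (D⁻¹ - D'⁻¹) • A' := by
    rw [smul_sub, sub_smul]; abel
  rw [hid]
  have h1 : ‖D⁻¹ • (A - A')‖ ≤ c0⁻¹ * ‖A - A'‖ := by
    rw [norm_smul, Real.norm_eq_abs, abs_of_pos (inv_pos.mpr hDpos)]
    exact mul_le_mul_of_nonneg_right ((inv_le_inv₀ hDpos hc0).mpr hD) (norm_nonneg _)
  have h2 : ‖(D⁻¹ - D'⁻¹) • A'‖ ≤ (M / c0 ^ 2) * |D - D'| := by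
    rw [norm_smul, Real.norm_eq_abs]
    have he : D⁻¹ - D'⁻¹ = (D' - D) / (D * D') := by field_simp
    rw [he, abs_div, abs_of_pos (mul_pos hDpos hD'pos), abs_sub_comm]
    have hden : c0 ^ 2 ≤ D * D' := by nlinarith
    have hM : 0 ≤ M := (norm_nonneg A').trans hA'
    have hfrac : |D - D'| / (D * D') ≤ |D - D'| / c0 ^ 2 :=
      div_le_div_of_nonneg_left (abs_nonneg _) (by positivity) hden
    calc |D - D'| / (D * D') * ‖A'‖ ≤ |D - D'| / c0 ^ 2 * M := by
          apply mul_le_mul hfrac hA' (norm_nonneg _) (by positivity)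
      _ = M / c0 ^ 2 * |D - D'| := by ring
  exact (norm_add_le _ _).trans (by linarith)

section GaussLip
variable {E : Type*} [NormedAddCommGroup E] [InnerProductSpace ℝ E]

/-- derivative of the Gaussian profile -/
lemma hasFDerivAt_gaussian (β : ℝ) (z : E) :
    HasFDerivAt (fun z : E => rexp (-β * ‖z‖ ^ 2 / 2))
      ((rexp (-β * ‖z‖ ^ 2 / 2) * (-β)) • innerSL ℝ z) z := by
  have h1 : HasFDerivAt (fun z : E => ‖z‖ ^ 2) (2 • (innerSL ℝ z)) z :=
    (hasStrictFDerivAt_norm_sq z).hasFDerivAt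
  have h2 := (h1.const_mul (-β / 2)).exp
  have he : (fun z : E => rexp (-β / 2 * ‖z‖ ^ 2)) = fun z : E => rexp (-β * ‖z‖ ^ 2 / 2) := by
    ext w; ring_nf
  rw [he] at h2
  convert h2 using 1
  ext v
  simp only [ContinuousLinearMap.smul_apply, ContinuousLinearMap.coe_smul', Pi.smul_apply,
    smul_eq_mul]
  push_cast
  ring_nf

lemma exp_le_inv_one_add {u : ℝ} (hu : 0 ≤ u) : rexp (-u) * (1 + u) ≤ 1 := by
  have h := add_one_le_exp u
  have h2 : 0 < rexp u := exp_pos u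
  rw [Real.exp_neg]
  rw [inv_mul_le_iff₀ h2]
  linarith

/-- scalar Lipschitz bound -/
lemma gaussian_lip (β : ℝ) (hβ : 0 < β) (z w : E) :
    |rexp (-β * ‖z‖ ^ 2 / 2) - rexp (-β * ‖w‖ ^ 2 / 2)| ≤ (β + 2) * ‖z - w‖ := by
  have key : ∀ x : E, ‖fderiv ℝ (fun z : E => rexp (-β * ‖z‖ ^ 2 / 2)) x‖ ≤ β + 2 := by
    intro x
    rw [(hasFDerivAt_gaussian β x).fderiv]
    rw [norm_smul, innerSL_apply_norm]
    have hee : -β * ‖x‖ ^ 2 / 2 = -(β * ‖x‖ ^ 2 / 2) := by ring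
    rw [hee]
    have hg : 0 < rexp (-(β * ‖x‖ ^ 2 / 2)) := exp_pos _
    rw [Real.norm_eq_abs, abs_mul, abs_of_pos hg, abs_of_neg (neg_neg_iff_pos.mpr hβ)]
    have he : rexp (-(β * ‖x‖ ^ 2 / 2)) * (1 + β * ‖x‖ ^ 2 / 2) ≤ 1 :=
      exp_le_inv_one_add (by positivity)
    rcases le_total ‖x‖ 1 with h1 | h1
    · have hE1 : rexp (-(β * ‖x‖ ^ 2 / 2)) ≤ 1 := by
        rw [Real.exp_le_one_iff]; nlinarith [norm_nonneg x]
      nlinarith [mul_nonneg hβ.le (mul_nonneg hg.le (sub_nonneg.mpr h1)),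
        mul_nonneg hβ.le (sub_nonneg.mpr hE1)]
    · nlinarith [mul_nonneg (mul_nonneg (mul_nonneg hg.le hβ.le) (norm_nonneg x))
        (sub_nonneg.mpr h1), he]
  have hd : ∀ x : E, DifferentiableAt ℝ (fun z : E => rexp (-β * ‖z‖ ^ 2 / 2)) x :=
    fun x => (hasFDerivAt_gaussian β x).differentiableAt
  have := Convex.norm_image_sub_le_of_norm_fderiv_le (fun x _ => hd x)
    (fun x _ => key x) convex_univ (Set.mem_univ w) (Set.mem_univ z)
  simpa [Real.norm_eq_abs] using this

lemma hasFDerivAt_gaussianSmul (β : ℝ) (z : E) :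
    HasFDerivAt (fun z : E => rexp (-β * ‖z‖ ^ 2 / 2) • z)
      (rexp (-β * ‖z‖ ^ 2 / 2) • ContinuousLinearMap.id ℝ E +
       ((rexp (-β * ‖z‖ ^ 2 / 2) * (-β)) • innerSL ℝ z).smulRight z) z :=
  (hasFDerivAt_gaussian β z).smul (hasFDerivAt_id z)

lemma gaussianSmul_lip (β : ℝ) (hβ : 0 < β) (z w : E) :
    ‖rexp (-β * ‖z‖ ^ 2 / 2) • z - rexp (-β * ‖w‖ ^ 2 / 2) • w‖ ≤ 2 * ‖z - w‖ := by
  have key : ∀ x : E, ‖fderiv ℝ (fun z : E => rexp (-β * ‖z‖ ^ 2 / 2) • z) x‖ ≤ 2 := by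
    intro x
    rw [(hasFDerivAt_gaussianSmul β x).fderiv]
    apply ContinuousLinearMap.opNorm_le_bound _ (by norm_num)
    intro v
    have hg : 0 < rexp (-β * ‖x‖ ^ 2 / 2) := exp_pos _
    have happ : (rexp (-β * ‖x‖ ^ 2 / 2) • ContinuousLinearMap.id ℝ E +
       ((rexp (-β * ‖x‖ ^ 2 / 2) * (-β)) • innerSL ℝ x).smulRight x) v =
       rexp (-β * ‖x‖ ^ 2 / 2) • v +
         (rexp (-β * ‖x‖ ^ 2 / 2) * (-β) * (inner ℝ x v : ℝ)) • x := by
      simp [ContinuousLinearMap.smulRight_apply, smul_smul]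
    rw [happ]
    have h1 : ‖rexp (-β * ‖x‖ ^ 2 / 2) • v‖ = rexp (-β * ‖x‖ ^ 2 / 2) * ‖v‖ := by
      rw [norm_smul, Real.norm_eq_abs, abs_of_pos hg]
    have h2 : ‖(rexp (-β * ‖x‖ ^ 2 / 2) * (-β) * (inner ℝ x v : ℝ)) • x‖
        ≤ rexp (-β * ‖x‖ ^ 2 / 2) * β * (‖x‖ ^ 2 * ‖v‖) := by
      rw [norm_smul, Real.norm_eq_abs, abs_mul, abs_mul, abs_of_pos hg,
        abs_of_neg (neg_neg_iff_pos.mpr hβ)]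
      have h3 := abs_real_inner_le_norm x v
      have h4 : (0:ℝ) ≤ rexp (-β * ‖x‖ ^ 2 / 2) * β * ‖x‖ := by positivity
      nlinarith [mul_le_mul_of_nonneg_left h3 h4]
    have he : rexp (-β * ‖x‖ ^ 2 / 2) * (1 + β * ‖x‖ ^ 2 / 2) ≤ 1 := by
      have hee : -β * ‖x‖ ^ 2 / 2 = -(β * ‖x‖ ^ 2 / 2) := by ring
      rw [hee]; exact exp_le_inv_one_add (by positivity)
    calc ‖rexp (-β * ‖x‖ ^ 2 / 2) • v +
          (rexp (-β * ‖x‖ ^ 2 / 2) * (-β) * (inner ℝ x v : ℝ)) • x‖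
        ≤ rexp (-β * ‖x‖ ^ 2 / 2) * ‖v‖ + rexp (-β * ‖x‖ ^ 2 / 2) * β * (‖x‖ ^ 2 * ‖v‖) := by
          refine (norm_add_le _ _).trans ?_; rw [h1]; linarith [h2]
      _ ≤ 2 * ‖v‖ := by
          nlinarith [mul_le_mul_of_nonneg_right he (norm_nonneg v), mul_nonneg hg.le (norm_nonneg v)]
  have hd : ∀ x : E, DifferentiableAt ℝ (fun z : E => rexp (-β * ‖z‖ ^ 2 / 2) • z) x :=
    fun x => (hasFDerivAt_gaussianSmul β x).differentiableAt
  simpa using Convex.norm_image_sub_le_of_norm_fderiv_le (fun x _ => hd x)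
    (fun x _ => key x) convex_univ (Set.mem_univ w) (Set.mem_univ z)

end GaussLip

variable {β : ℝ} {x x' : EuclideanSpace ℝ (Fin d)} {ρ : Measure (EuclideanSpace ℝ (Fin d))}

lemma Cd_pos (hβ : 0 < β) : 0 < (β / (2 * π)) ^ ((d : ℝ) / 2) :=
  Real.rpow_pos_of_pos (by positivity) _

lemma Gkernel_pos (hβ : 0 < β) (z : EuclideanSpace ℝ (Fin d)) : 0 < Gkernel d β z := by
  unfold Gkernel
  have := Cd_pos (d := d) hβ
  positivity

lemma Gkernel_le (hβ : 0 < β) (z : EuclideanSpace ℝ (Fin d)) :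
    Gkernel d β z ≤ (β / (2 * π)) ^ ((d : ℝ) / 2) := by
  unfold Gkernel
  have h1 : rexp (-β * ‖z‖ ^ 2 / 2) ≤ 1 := by
    rw [Real.exp_le_one_iff]
    nlinarith [sq_nonneg ‖z‖]
  nlinarith [Cd_pos (d := d) hβ]

lemma Gkernel_lip (hβ : 0 < β) (z w : EuclideanSpace ℝ (Fin d)) :
    |Gkernel d β z - Gkernel d β w| ≤ (β / (2 * π)) ^ ((d : ℝ) / 2) * (β + 2) * ‖z - w‖ := by
  unfold Gkernel
  rw [← mul_sub, abs_mul, abs_of_pos (Cd_pos (d := d) hβ), mul_assoc]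
  exact mul_le_mul_of_nonneg_left (gaussian_lip β hβ z w) (Cd_pos (d := d) hβ).le

lemma contG (x : EuclideanSpace ℝ (Fin d)) :
    Continuous fun y : EuclideanSpace ℝ (Fin d) => Gkernel d β (x - y) := by
  unfold Gkernel; fun_prop

lemma contGy (x : EuclideanSpace ℝ (Fin d)) :
    Continuous fun y : EuclideanSpace ℝ (Fin d) => Gkernel d β (x - y) • y := by
  unfold Gkernel; fun_prop

lemma integrable_G (hβ : 0 < β) (hρp : IsProbabilityMeasure ρ) :
    Integrable (fun y => Gkernel d β (x - y)) ρ := by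
  haveI := hρp
  refine Integrable.mono' (integrable_const ((β / (2 * π)) ^ ((d : ℝ) / 2)))
    (contG x).aestronglyMeasurable (Filter.Eventually.of_forall fun y => ?_)
  rw [Real.norm_eq_abs, abs_of_pos (Gkernel_pos hβ _)]
  exact Gkernel_le hβ _

lemma integrable_Gy (hβ : 0 < β) {R : ℝ} (hρp : IsProbabilityMeasure ρ)
    (hρs : ρ (closedBall (0 : EuclideanSpace ℝ (Fin d)) R)ᶜ = 0) :
    Integrable (fun y => Gkernel d β (x - y) • y) ρ := by
  haveI := hρp
  refine Integrable.mono' (integrable_const ((β / (2 * π)) ^ ((d : ℝ) / 2) * R))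
    (contGy x).aestronglyMeasurable ?_
  filter_upwards [ae_mem_ball hρs] with y hy
  rw [norm_smul, Real.norm_eq_abs, abs_of_pos (Gkernel_pos hβ _)]
  exact mul_le_mul (Gkernel_le hβ _) (mem_closedBall_zero_iff.mp hy) (norm_nonneg _)
    (Cd_pos (d := d) hβ).le

lemma Gconv_lower (hβ : 0 < β) {R : ℝ} (hρp : IsProbabilityMeasure ρ)
    (hρs : ρ (closedBall (0 : EuclideanSpace ℝ (Fin d)) R)ᶜ = 0)
    (hx : x ∈ closedBall (0 : EuclideanSpace ℝ (Fin d)) R) :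
    (β / (2 * π)) ^ ((d : ℝ) / 2) * rexp (-β * (2 * R) ^ 2 / 2) ≤ Gconv d β ρ x := by
  haveI := hρp
  have hae : ∀ᵐ y ∂ρ, (β / (2 * π)) ^ ((d : ℝ) / 2) * rexp (-β * (2 * R) ^ 2 / 2)
      ≤ Gkernel d β (x - y) := by
    filter_upwards [ae_mem_ball hρs] with y hy
    unfold Gkernel
    apply mul_le_mul_of_nonneg_left _ (Cd_pos (d := d) hβ).le
    apply Real.exp_le_exp.mpr
    have h1 : ‖x - y‖ ≤ 2 * R := by
      calc ‖x - y‖ ≤ ‖x‖ + ‖y‖ := norm_sub_le _ _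
        _ ≤ 2 * R := by
          have := mem_closedBall_zero_iff.mp hx
          have := mem_closedBall_zero_iff.mp hy
          linarith
    have hR0 : (0:ℝ) ≤ R := (norm_nonneg x).trans (mem_closedBall_zero_iff.mp hx)
    have hsq : ‖x - y‖ ^ 2 ≤ (2 * R) ^ 2 := pow_le_pow_left₀ (norm_nonneg _) h1 2
    linarith [mul_nonneg hβ.le (sub_nonneg.mpr hsq)]
  have := integral_mono_ae (integrable_const _) (integrable_G hβ hρp) hae
  calc (β / (2 * π)) ^ ((d : ℝ) / 2) * rexp (-β * (2 * R) ^ 2 / 2)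
      = ∫ _, (β / (2 * π)) ^ ((d : ℝ) / 2) * rexp (-β * (2 * R) ^ 2 / 2) ∂ρ := by
        rw [MeasureTheory.integral_const]; simp
    _ ≤ Gconv d β ρ x := this

lemma Gconv_upper (hβ : 0 < β) (hρp : IsProbabilityMeasure ρ) :
    Gconv d β ρ x ≤ (β / (2 * π)) ^ ((d : ℝ) / 2) := by
  haveI := hρp
  have := integral_mono_ae (integrable_G hβ hρp) (integrable_const _)
    (Filter.Eventually.of_forall fun y => Gkernel_le hβ (x - y))
  calc Gconv d β ρ x ≤ ∫ _, (β / (2 * π)) ^ ((d : ℝ) / 2) ∂ρ := this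
    _ = (β / (2 * π)) ^ ((d : ℝ) / 2) := by rw [MeasureTheory.integral_const]; simp

lemma Anorm_le (hβ : 0 < β) {R : ℝ} (hρp : IsProbabilityMeasure ρ)
    (hρs : ρ (closedBall (0 : EuclideanSpace ℝ (Fin d)) R)ᶜ = 0) :
    ‖∫ y, Gkernel d β (x - y) • y ∂ρ‖ ≤ (β / (2 * π)) ^ ((d : ℝ) / 2) * R := by
  haveI := hρp
  have hb : ∀ᵐ y ∂ρ, ‖Gkernel d β (x - y) • y‖ ≤ (β / (2 * π)) ^ ((d : ℝ) / 2) * R := by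
    filter_upwards [ae_mem_ball hρs] with y hy
    rw [norm_smul, Real.norm_eq_abs, abs_of_pos (Gkernel_pos hβ _)]
    exact mul_le_mul (Gkernel_le hβ _) (mem_closedBall_zero_iff.mp hy) (norm_nonneg _)
      (Cd_pos (d := d) hβ).le
  simpa using norm_integral_le_of_norm_le_const hb

lemma Gconv_sub_x (hβ : 0 < β) (hρp : IsProbabilityMeasure ρ) :
    |Gconv d β ρ x - Gconv d β ρ x'| ≤
      (β / (2 * π)) ^ ((d : ℝ) / 2) * (β + 2) * ‖x - x'‖ := by
  haveI := hρp
  unfold Gconv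
  rw [← MeasureTheory.integral_sub (integrable_G hβ hρp) (integrable_G hβ hρp)]
  have hb : ∀ᵐ y ∂ρ, ‖Gkernel d β (x - y) - Gkernel d β (x' - y)‖ ≤
      (β / (2 * π)) ^ ((d : ℝ) / 2) * (β + 2) * ‖x - x'‖ := by
    refine Filter.Eventually.of_forall fun y => ?_
    rw [Real.norm_eq_abs]
    have := Gkernel_lip hβ (x - y) (x' - y)
    rwa [sub_sub_sub_cancel_right] at this
  simpa [Real.norm_eq_abs] using norm_integral_le_of_norm_le_const hb

lemma A_sub_x (hβ : 0 < β) {R : ℝ} (hρp : IsProbabilityMeasure ρ)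
    (hρs : ρ (closedBall (0 : EuclideanSpace ℝ (Fin d)) R)ᶜ = 0) :
    ‖(∫ y, Gkernel d β (x - y) • y ∂ρ) - ∫ y, Gkernel d β (x' - y) • y ∂ρ‖ ≤
      (β / (2 * π)) ^ ((d : ℝ) / 2) * (β + 2) * R * ‖x - x'‖ := by
  haveI := hρp
  rw [← MeasureTheory.integral_sub (integrable_Gy hβ hρp hρs) (integrable_Gy hβ hρp hρs)]
  have hb : ∀ᵐ y ∂ρ, ‖Gkernel d β (x - y) • y - Gkernel d β (x' - y) • y‖ ≤
      (β / (2 * π)) ^ ((d : ℝ) / 2) * (β + 2) * R * ‖x - x'‖ := by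
    filter_upwards [ae_mem_ball hρs] with y hy
    rw [← sub_smul, norm_smul, Real.norm_eq_abs]
    have h1 := Gkernel_lip hβ (x - y) (x' - y)
    rw [sub_sub_sub_cancel_right] at h1
    have h2 : ‖y‖ ≤ R := mem_closedBall_zero_iff.mp hy
    have hC := (Cd_pos (d := d) hβ).le
    calc |Gkernel d β (x - y) - Gkernel d β (x' - y)| * ‖y‖
        ≤ ((β / (2 * π)) ^ ((d : ℝ) / 2) * (β + 2) * ‖x - x'‖) * R := by
          apply mul_le_mul h1 h2 (norm_nonneg _) (by positivity)
      _ = (β / (2 * π)) ^ ((d : ℝ) / 2) * (β + 2) * R * ‖x - x'‖ := by ring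
  simpa using norm_integral_le_of_norm_le_const hb

lemma Gconv_sub_mu (hβ : 0 < β) {R : ℝ}
    (hμp : IsProbabilityMeasure μ) (hνp : IsProbabilityMeasure ν)
    (hμs : μ (closedBall (0 : EuclideanSpace ℝ (Fin d)) R)ᶜ = 0)
    (hνs : ν (closedBall (0 : EuclideanSpace ℝ (Fin d)) R)ᶜ = 0) :
    |Gconv d β μ x - Gconv d β ν x| ≤
      (β / (2 * π)) ^ ((d : ℝ) / 2) * (β + 2) * W1 μ ν := by
  have hK : 0 < (β / (2 * π)) ^ ((d : ℝ) / 2) * (β + 2) :=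
    mul_pos (Cd_pos (d := d) hβ) (by linarith)
  exact abs_integral_sub_le_W1 hμp hνp hμs hνs hK (fun a b => by
    rw [Real.dist_eq, dist_eq_norm]
    have := Gkernel_lip hβ (x - a) (x - b)
    rwa [sub_sub_sub_cancel_left, norm_sub_rev] at this)

lemma A_sub_mu (hβ : 0 < β) {R : ℝ} (hR : 0 < R)
    (hμp : IsProbabilityMeasure μ) (hνp : IsProbabilityMeasure ν)
    (hμs : μ (closedBall (0 : EuclideanSpace ℝ (Fin d)) R)ᶜ = 0)
    (hνs : ν (closedBall (0 : EuclideanSpace ℝ (Fin d)) R)ᶜ = 0)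
    (hx : x ∈ closedBall (0 : EuclideanSpace ℝ (Fin d)) R) :
    ‖(∫ y, Gkernel d β (x - y) • y ∂μ) - ∫ y, Gkernel d β (x - y) • y ∂ν‖ ≤
      (β / (2 * π)) ^ ((d : ℝ) / 2) * (R * (β + 2) + 2) * W1 μ ν := by
  haveI := hμp; haveI := hνp
  set Cd := (β / (2 * π)) ^ ((d : ℝ) / 2) with hCd
  have hC : 0 < Cd := Cd_pos (d := d) hβ
  have hKA : 0 < Cd * (R * (β + 2) + 2) := by
    apply mul_pos hC; nlinarith
  have hW := W1_nonneg hμp hνp hμs hνs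
  set Aμ := ∫ y, Gkernel d β (x - y) • y ∂μ with hAμ
  set Aν := ∫ y, Gkernel d β (x - y) • y ∂ν with hAν
  by_cases hw0 : Aμ - Aν = 0
  · rw [hw0, norm_zero]; exact mul_nonneg hKA.le hW
  have hwn : 0 < ‖Aμ - Aν‖ := norm_pos_iff.mpr hw0
  set w := Aμ - Aν with hwdef
  set e : EuclideanSpace ℝ (Fin d) := ‖w‖⁻¹ • w with hedef
  have he : ‖e‖ = 1 := by
    rw [hedef, norm_smul, norm_inv, norm_norm, inv_mul_cancel₀ hwn.ne']
  set φ : EuclideanSpace ℝ (Fin d) → ℝ :=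
    fun y => (inner ℝ e (Gkernel d β (x - y) • y) : ℝ) with hφdef
  have h5 : ∀ y : EuclideanSpace ℝ (Fin d),
      (inner ℝ e y : ℝ) = (inner ℝ e x : ℝ) - (inner ℝ e (x - y) : ℝ) := by
    intro y
    rw [← inner_sub_right, sub_sub_cancel]
  have hφeq : ∀ y, φ y = Cd * ((inner ℝ e x : ℝ) * rexp (-β * ‖x - y‖ ^ 2 / 2) -
      (inner ℝ e (rexp (-β * ‖x - y‖ ^ 2 / 2) • (x - y)) : ℝ)) := by
    intro y
    rw [hφdef]
    simp only [real_inner_smul_right]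
    rw [h5 y]
    show Gkernel d β (x - y) * _ = _
    unfold Gkernel
    rw [← hCd]
    ring
  have hex : |(inner ℝ e x : ℝ)| ≤ R := by
    calc |(inner ℝ e x : ℝ)| ≤ ‖e‖ * ‖x‖ := abs_real_inner_le_norm e x
      _ ≤ R := by rw [he, one_mul]; exact mem_closedBall_zero_iff.mp hx
  have hφlip : ∀ a b, dist (φ a) (φ b) ≤ Cd * (R * (β + 2) + 2) * dist a b := by
    intro a b
    rw [Real.dist_eq, dist_eq_norm, hφeq a, hφeq b]
    have hg := gaussian_lip β hβ (x - a) (x - b)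
    have hΦ := gaussianSmul_lip β hβ (x - a) (x - b)
    rw [sub_sub_sub_cancel_left] at hg hΦ
    have hinnerΦ : |(inner ℝ e (rexp (-β * ‖x - a‖ ^ 2 / 2) • (x - a)) : ℝ) -
        (inner ℝ e (rexp (-β * ‖x - b‖ ^ 2 / 2) • (x - b)) : ℝ)| ≤ 2 * ‖b - a‖ := by
      rw [← inner_sub_right]
      calc |(inner ℝ e (rexp (-β * ‖x - a‖ ^ 2 / 2) • (x - a) -
            rexp (-β * ‖x - b‖ ^ 2 / 2) • (x - b)) : ℝ)|
          ≤ ‖e‖ * ‖rexp (-β * ‖x - a‖ ^ 2 / 2) • (x - a) -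
              rexp (-β * ‖x - b‖ ^ 2 / 2) • (x - b)‖ := abs_real_inner_le_norm _ _
        _ ≤ 2 * ‖b - a‖ := by rw [he, one_mul]; exact hΦ
    have hE : Cd * ((inner ℝ e x : ℝ) * rexp (-β * ‖x - a‖ ^ 2 / 2) -
          (inner ℝ e (rexp (-β * ‖x - a‖ ^ 2 / 2) • (x - a)) : ℝ)) -
        Cd * ((inner ℝ e x : ℝ) * rexp (-β * ‖x - b‖ ^ 2 / 2) -
          (inner ℝ e (rexp (-β * ‖x - b‖ ^ 2 / 2) • (x - b)) : ℝ)) =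
        Cd * ((inner ℝ e x : ℝ) * (rexp (-β * ‖x - a‖ ^ 2 / 2) - rexp (-β * ‖x - b‖ ^ 2 / 2)) -
          ((inner ℝ e (rexp (-β * ‖x - a‖ ^ 2 / 2) • (x - a)) : ℝ) -
           (inner ℝ e (rexp (-β * ‖x - b‖ ^ 2 / 2) • (x - b)) : ℝ))) := by ring
    rw [hE, abs_mul, abs_of_pos hC]
    have hnab : ‖b - a‖ = ‖a - b‖ := norm_sub_rev b a
    have habs : |(inner ℝ e x : ℝ) * (rexp (-β * ‖x - a‖ ^ 2 / 2) - rexp (-β * ‖x - b‖ ^ 2 / 2)) -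
          ((inner ℝ e (rexp (-β * ‖x - a‖ ^ 2 / 2) • (x - a)) : ℝ) -
           (inner ℝ e (rexp (-β * ‖x - b‖ ^ 2 / 2) • (x - b)) : ℝ))|
        ≤ R * ((β + 2) * ‖b - a‖) + 2 * ‖b - a‖ := by
      have t1 : |(inner ℝ e x : ℝ) * (rexp (-β * ‖x - a‖ ^ 2 / 2) - rexp (-β * ‖x - b‖ ^ 2 / 2))|
          ≤ R * ((β + 2) * ‖b - a‖) := by
        rw [abs_mul]
        exact mul_le_mul hex hg (abs_nonneg _) hR.le
      calc _ ≤ |(inner ℝ e x : ℝ) * (rexp (-β * ‖x - a‖ ^ 2 / 2) - rexp (-β * ‖x - b‖ ^ 2 / 2))| +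
            |(inner ℝ e (rexp (-β * ‖x - a‖ ^ 2 / 2) • (x - a)) : ℝ) -
             (inner ℝ e (rexp (-β * ‖x - b‖ ^ 2 / 2) • (x - b)) : ℝ)| := abs_sub _ _
        _ ≤ R * ((β + 2) * ‖b - a‖) + 2 * ‖b - a‖ := by linarith
    calc Cd * |_| ≤ Cd * (R * ((β + 2) * ‖b - a‖) + 2 * ‖b - a‖) :=
          mul_le_mul_of_nonneg_left habs hC.le
      _ = Cd * (R * (β + 2) + 2) * ‖a - b‖ := by rw [← hnab]; ring
  have hkey : ‖w‖ = (∫ y, φ y ∂μ) - ∫ y, φ y ∂ν := by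
    have h1 : (inner ℝ e w : ℝ) = ‖w‖ := by
      rw [hedef, real_inner_smul_left, real_inner_self_eq_norm_sq]
      field_simp
    have h2 : (inner ℝ e w : ℝ) = (inner ℝ e Aμ : ℝ) - (inner ℝ e Aν : ℝ) := by
      rw [hwdef, inner_sub_right]
    have h3 : (inner ℝ e Aμ : ℝ) = ∫ y, φ y ∂μ := by
      rw [hAμ, hφdef]
      exact (integral_inner (integrable_Gy hβ hμp hμs) e).symm
    have h4 : (inner ℝ e Aν : ℝ) = ∫ y, φ y ∂ν := by
      rw [hAν, hφdef]
      exact (integral_inner (integrable_Gy hβ hνp hνs) e).symm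
    rw [← h1, h2, h3, h4]
  rw [show ‖Aμ - Aν‖ = ‖w‖ from rfl, hkey]
  calc (∫ y, φ y ∂μ) - ∫ y, φ y ∂ν ≤ |(∫ y, φ y ∂μ) - ∫ y, φ y ∂ν| := le_abs_self _
    _ ≤ Cd * (R * (β + 2) + 2) * W1 μ ν :=
        abs_integral_sub_le_W1 hμp hνp hμs hνs hKA hφlip

/-- On an invariant ball `B_R`, the Gaussian-attention drift is
jointly Lipschitz in the point and in the measure (in `W₁`). -/
theorem drift_lipschitz_bounded_support (β R : ℝ) (hβ : 0 < β) (hR : 0 < R) :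
    ∃ L > 0, ∀ (x x' : EuclideanSpace ℝ (Fin d))
      (μ ν : Measure (EuclideanSpace ℝ (Fin d))),
      IsProbabilityMeasure μ → IsProbabilityMeasure ν →
      μ (closedBall (0 : EuclideanSpace ℝ (Fin d)) R)ᶜ = 0 →
      ν (closedBall (0 : EuclideanSpace ℝ (Fin d)) R)ᶜ = 0 →
      x ∈ closedBall (0 : EuclideanSpace ℝ (Fin d)) R →
      x' ∈ closedBall (0 : EuclideanSpace ℝ (Fin d)) R →
      ‖Gdrift d β μ x - Gdrift d β ν x'‖ ≤ L * (‖x - x'‖ + W1 μ ν) := by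
  classical
  have hC : 0 < (β / (2 * π)) ^ ((d : ℝ) / 2) := Cd_pos hβ
  set Cd := (β / (2 * π)) ^ ((d : ℝ) / 2) with hCd
  have hc0 : 0 < Cd * rexp (-β * (2 * R) ^ 2 / 2) := mul_pos hC (exp_pos _)
  set c0 := Cd * rexp (-β * (2 * R) ^ 2 / 2) with hc0def
  have hc0i : 0 < c0⁻¹ := inv_pos.mpr hc0
  have hK1 : 0 < Cd * (β + 2) := mul_pos hC (by linarith)
  have hKA : 0 < Cd * (R * (β + 2) + 2) := mul_pos hC (by nlinarith)
  have hM : 0 < Cd * R := mul_pos hC hR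
  have hMc : 0 < Cd * R / c0 ^ 2 := div_pos hM (pow_pos hc0 2)
  refine ⟨1 + c0⁻¹ * (Cd * (β + 2) * R + Cd * (R * (β + 2) + 2))
      + 2 * (Cd * R / c0 ^ 2 * (Cd * (β + 2))), by
        have h1 : 0 < c0⁻¹ * (Cd * (β + 2) * R + Cd * (R * (β + 2) + 2)) :=
          mul_pos hc0i (by nlinarith)
        have h2 : 0 < Cd * R / c0 ^ 2 * (Cd * (β + 2)) := mul_pos hMc hK1
        linarith, ?_⟩
  intro x x' μ ν hμp hνp hμs hνs hx hx'
  haveI := hμp; haveI := hνp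
  have hDμx : c0 ≤ Gconv d β μ x := Gconv_lower hβ hμp hμs hx
  have hDμx' : c0 ≤ Gconv d β μ x' := Gconv_lower hβ hμp hμs hx'
  have hDνx' : c0 ≤ Gconv d β ν x' := Gconv_lower hβ hνp hνs hx'
  have hAμx' : ‖∫ y, Gkernel d β (x' - y) • y ∂μ‖ ≤ Cd * R := Anorm_le hβ hμp hμs
  have hAνx' : ‖∫ y, Gkernel d β (x' - y) • y ∂ν‖ ≤ Cd * R := Anorm_le hβ hνp hνs
  have hAx : ‖(∫ y, Gkernel d β (x - y) • y ∂μ) - ∫ y, Gkernel d β (x' - y) • y ∂μ‖ ≤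
      Cd * (β + 2) * R * ‖x - x'‖ := A_sub_x hβ hμp hμs
  have hDx : |Gconv d β μ x - Gconv d β μ x'| ≤ Cd * (β + 2) * ‖x - x'‖ :=
    Gconv_sub_x hβ hμp
  have hAmu : ‖(∫ y, Gkernel d β (x' - y) • y ∂μ) - ∫ y, Gkernel d β (x' - y) • y ∂ν‖ ≤
      Cd * (R * (β + 2) + 2) * W1 μ ν := A_sub_mu hβ hR hμp hνp hμs hνs hx'
  have hDmu : |Gconv d β μ x' - Gconv d β ν x'| ≤ Cd * (β + 2) * W1 μ ν :=
    Gconv_sub_mu hβ hμp hνp hμs hνs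
  have hW : 0 ≤ W1 μ ν := W1_nonneg hμp hνp hμs hνs
  have hh : (0:ℝ) ≤ ‖x - x'‖ := norm_nonneg _
  -- quotient estimates
  have q1 := quot_est (A := ∫ y, Gkernel d β (x - y) • y ∂μ)
    (A' := ∫ y, Gkernel d β (x' - y) • y ∂μ) hc0 hDμx hDμx' hAμx'
  have q2 := quot_est (A := ∫ y, Gkernel d β (x' - y) • y ∂μ)
    (A' := ∫ y, Gkernel d β (x' - y) • y ∂ν) hc0 hDμx' hDνx' hAνx'
  have hb1 : ‖Gbarycenter d β μ x - Gbarycenter d β μ x'‖ ≤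
      c0⁻¹ * (Cd * (β + 2) * R * ‖x - x'‖) + Cd * R / c0 ^ 2 * (Cd * (β + 2) * ‖x - x'‖) := by
    unfold Gbarycenter
    refine q1.trans ?_
    have t1 := mul_le_mul_of_nonneg_left hAx hc0i.le
    have t2 := mul_le_mul_of_nonneg_left hDx hMc.le
    linarith
  have hb2 : ‖Gbarycenter d β μ x' - Gbarycenter d β ν x'‖ ≤
      c0⁻¹ * (Cd * (R * (β + 2) + 2) * W1 μ ν) + Cd * R / c0 ^ 2 * (Cd * (β + 2) * W1 μ ν) := by
    unfold Gbarycenter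
    refine q2.trans ?_
    have t1 := mul_le_mul_of_nonneg_left hAmu hc0i.le
    have t2 := mul_le_mul_of_nonneg_left hDmu hMc.le
    linarith
  have tri2 : ‖Gbarycenter d β μ x - Gbarycenter d β ν x'‖ ≤
      ‖Gbarycenter d β μ x - Gbarycenter d β μ x'‖ +
      ‖Gbarycenter d β μ x' - Gbarycenter d β ν x'‖ := by
    have := dist_triangle (Gbarycenter d β μ x) (Gbarycenter d β μ x') (Gbarycenter d β ν x')
    simpa [dist_eq_norm] using this
  have tri1 : ‖Gdrift d β μ x - Gdrift d β ν x'‖ ≤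
      ‖Gbarycenter d β μ x - Gbarycenter d β ν x'‖ + ‖x - x'‖ := by
    unfold Gdrift
    have he : Gbarycenter d β μ x - x - (Gbarycenter d β ν x' - x') =
        Gbarycenter d β μ x - Gbarycenter d β ν x' - (x - x') := by abel
    rw [he]
    exact norm_sub_le _ _
  nlinarith [mul_nonneg (mul_nonneg hc0i.le hKA.le) hh,
    mul_nonneg (mul_nonneg hMc.le hK1.le) hh,
    mul_nonneg (mul_nonneg hc0i.le (mul_nonneg hK1.le hR.le)) hW,
    mul_nonneg (mul_nonneg hMc.le hK1.le) hW, hW, hh]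

end
end

section
/- Fix τ > 0 and β > 0, and let s ≥ 0. Let λ_β(t) be the solution of λ̇ = −2λ/(1 + βλ) with λ(0) = s + τ, evaluated at T_β = βτ/2. Then λ_β(T_β) → s as β → ∞. That is: if λ_β(T_β) + β^{−1} log λ_β(T_β) = s + β^{−1} log(s + τ) and 0 < λ_β(T_β) ≤ s + τ, then lim_{β→∞} λ_β(T_β) = s, including the degenerate case s = 0. -/
open Filter Real

/-- eigenvalue recovery at the denoising time. If `ℓ(β)` denotes
the value `λ_β(T_β)` of the solution of `λ̇ = −2λ/(1+βλ)`, `λ(0) = s + τ`, at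
`T_β = βτ/2`, characterized implicitly by
`ℓ(β) + β⁻¹ log ℓ(β) = s + β⁻¹ log(s+τ)` with `0 < ℓ(β) ≤ s + τ`, then
`ℓ(β) → s` as `β → ∞`, including the degenerate case `s = 0`. -/
theorem eigenvalue_denoising_limit (τ s : ℝ) (hτ : 0 < τ) (hs : 0 ≤ s)
    (ℓ : ℝ → ℝ)
    (hpos : ∀ β > (0 : ℝ), 0 < ℓ β)
    (hle : ∀ β > (0 : ℝ), ℓ β ≤ s + τ)
    (heq : ∀ β > (0 : ℝ),
      ℓ β + β⁻¹ * Real.log (ℓ β) = s + β⁻¹ * Real.log (s + τ)) :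
    Tendsto ℓ atTop (nhds s) := by
  have hlow : ∀ β > (0 : ℝ), s ≤ ℓ β := by
    intro β hβ
    have h1 := heq β hβ
    have hlog : Real.log (ℓ β) ≤ Real.log (s + τ) :=
      Real.log_le_log (hpos β hβ) (hle β hβ)
    have hinv : (0:ℝ) ≤ β⁻¹ := le_of_lt (inv_pos.mpr hβ)
    have := mul_le_mul_of_nonneg_left hlog hinv
    linarith
  rcases eq_or_lt_of_le hs with hs0 | hs0
  · -- s = 0
    rw [Metric.tendsto_atTop]
    intro ε hε
    refine ⟨max 1 ((Real.log τ - Real.log (ε/2)) / (ε/2) + 1), fun β hβ => ?_⟩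
    have hβ1 : (1:ℝ) ≤ β := le_trans (le_max_left _ _) hβ
    have hβ0 : (0:ℝ) < β := lt_of_lt_of_le one_pos hβ1
    have hβ2 : (Real.log τ - Real.log (ε/2)) / (ε/2) < β :=
      lt_of_lt_of_le (lt_add_of_pos_right _ one_pos) (le_trans (le_max_right _ _) hβ)
    have hkey : ℓ β ≤ ε / 2 := by
      by_contra h
      push_neg at h
      have hε2 : (0:ℝ) < ε/2 := by linarith
      have hloge : Real.log (ε/2) ≤ Real.log (ℓ β) := Real.log_le_log hε2 (le_of_lt h)
      have h1 := heq β hβ0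
      rw [← hs0] at h1
      simp only [zero_add] at h1
      have h2 : β * ℓ β + Real.log (ℓ β) = Real.log τ := by
        have := congrArg (fun x => β * x) h1
        field_simp at this
        linarith [this]
      have h3 : Real.log τ - Real.log (ε/2) < β * (ε/2) := by
        rwa [div_lt_iff₀ hε2] at hβ2
      have h4 : β * (ε/2) < β * ℓ β := by
        exact mul_lt_mul_of_pos_left h hβ0
      linarith
    have hp := hpos β hβ0
    rw [Real.dist_eq, ← hs0, sub_zero, abs_of_pos hp]
    linarith
  · -- s > 0
    have hupper : ∀ β > (0:ℝ),
        ℓ β ≤ s + β⁻¹ * (Real.log (s + τ) - Real.log s) := by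
      intro β hβ
      have h1 := heq β hβ
      have hlog : Real.log s ≤ Real.log (ℓ β) := Real.log_le_log hs0 (hlow β hβ)
      have hinv : (0:ℝ) ≤ β⁻¹ := le_of_lt (inv_pos.mpr hβ)
      have := mul_le_mul_of_nonneg_left hlog hinv
      nlinarith
    have htend : Tendsto (fun β : ℝ => s + β⁻¹ * (Real.log (s + τ) - Real.log s))
        atTop (nhds s) := by
      have : Tendsto (fun β : ℝ => β⁻¹ * (Real.log (s + τ) - Real.log s)) atTop (nhds 0) := by
        simpa using tendsto_inv_atTop_zero.mul_const (Real.log (s + τ) - Real.log s)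
      simpa using tendsto_const_nhds.add this
    refine tendsto_of_tendsto_of_tendsto_of_le_of_le' tendsto_const_nhds htend ?_ ?_
    · filter_upwards [eventually_gt_atTop 0] with β hβ using hlow β hβ
    · filter_upwards [eventually_gt_atTop 0] with β hβ using hupper β hβ
end
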